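/- arXiv:2106.04105 — 2 statements merged into one kernel-verified Lean document; each statement's English description precedes it below -/
import Mathlib

section
/- Let μ be a fully supported probability distribution on {−1,1}ⁿ and let α₁,…,αₙ ∈ (0,1]. Suppose that the map (z₁,…,zₙ, w₁,…,wₙ) ↦ log( ∑_{x ∈ {−1,1}ⁿ} μ(x) · ∏_{i : x_i = 1} z_i^{α_i} · ∏_{i : x_i = −1} w_i^{α_i} ) is concave on ℝ^{2n}_{>0}. Then for every probability distribution ν on {−1,1}ⁿ, ∑_{i=1}^n α_i · D(ν_i ‖ μ_i) ≤ D(ν ‖ μ), where ν_i (resp. μ_i) denotes the marginal distribution on {−1,1} of the i-th coordinate under ν (resp. μ). -/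
open Finset

/-- KL divergence `D(ν ‖ μ) = ∑_x ν(x) log (ν(x)/μ(x))` on a finite type. -/
noncomputable def KLdiv {X : Type*} [Fintype X] (ν μ : X → ℝ) : ℝ :=
  ∑ x : X, ν x * Real.log (ν x / μ x)

/-- The marginal of the `i`-th coordinate of a distribution on `{−1,1}ⁿ`. -/
noncomputable def coordMarg {n : ℕ} (i : Fin n) (ν : (Fin n → Bool) → ℝ) (b : Bool) : ℝ :=
  ∑ x ∈ Finset.univ.filter (fun x : Fin n → Bool => x i = b), ν x

lemma filter_false_eq {n : ℕ} (i : Fin n) :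
    Finset.univ.filter (fun x : Fin n → Bool => x i = false)
      = Finset.univ.filter (fun x : Fin n → Bool => ¬ x i = true) := by
  ext x; simp [Bool.not_eq_true]

lemma marg_add {n : ℕ} (f : (Fin n → Bool) → ℝ) (i : Fin n) :
    coordMarg i f true + coordMarg i f false = ∑ x, f x := by
  rw [coordMarg, coordMarg, filter_false_eq,
    Finset.sum_filter_add_sum_filter_not Finset.univ (fun x : Fin n → Bool => x i = true)]

lemma marg_pos {n : ℕ} {f : (Fin n → Bool) → ℝ} (hf : ∀ x, 0 < f x) (i : Fin n) (b : Bool) :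
    0 < coordMarg i f b := by
  refine Finset.sum_pos (fun x _ => hf x) ⟨fun _ => b, by simp⟩

lemma marg_nonneg {n : ℕ} {f : (Fin n → Bool) → ℝ} (hf : ∀ x, 0 ≤ f x) (i : Fin n) (b : Bool) :
    0 ≤ coordMarg i f b :=
  Finset.sum_nonneg (fun x _ => hf x)

lemma swap_sum {n : ℕ} (f : (Fin n → Bool) → ℝ) (c d : Fin n → ℝ) :
    ∑ x, f x * (∑ i, if x i = true then c i else d i)
      = ∑ i, (coordMarg i f true * c i + coordMarg i f false * d i) := by
  simp_rw [Finset.mul_sum]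
  rw [Finset.sum_comm]
  refine Finset.sum_congr rfl fun i _ => ?_
  rw [coordMarg, coordMarg, Finset.sum_mul, Finset.sum_mul, filter_false_eq,
    ← Finset.sum_filter_add_sum_filter_not Finset.univ (fun x : Fin n → Bool => x i = true)]
  congr 1
  · exact Finset.sum_congr rfl (fun x hx => by simp [(Finset.mem_filter.mp hx).2])
  · exact Finset.sum_congr rfl (fun x hx => by simp [(Finset.mem_filter.mp hx).2])

lemma prod_split {n : ℕ} (x : Fin n → Bool) (u v : Fin n → ℝ) :
    (∏ i ∈ Finset.univ.filter (fun i => x i = true), u i) *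
    (∏ i ∈ Finset.univ.filter (fun i => x i = false), v i)
      = ∏ i, (if x i = true then u i else v i) := by
  rw [show Finset.univ.filter (fun i => x i = false)
      = Finset.univ.filter (fun i => ¬ x i = true) by ext i; simp [Bool.not_eq_true],
    ← Finset.prod_filter_mul_prod_filter_not Finset.univ (fun i => x i = true)
      (fun i => if x i = true then u i else v i)]
  congr 1
  · exact Finset.prod_congr rfl (fun i hi => by simp [(Finset.mem_filter.mp hi).2])
  · exact Finset.prod_congr rfl (fun i hi => by simp [(Finset.mem_filter.mp hi).2])

lemma deriv_step {n : ℕ} (μ : (Fin n → Bool) → ℝ) (α : Fin n → ℝ) (c : (Fin n → Bool) → Fin n → ℝ) :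
    HasDerivAt (fun t : ℝ => ∑ x : Fin n → Bool, μ x * ∏ i, (1 + t * c x i) ^ α i)
      (∑ x : Fin n → Bool, μ x * ∑ i, α i * c x i) 0 := by
  apply HasDerivAt.fun_sum
  intro x _
  apply HasDerivAt.const_mul
  have h1 : ∀ i ∈ (univ : Finset (Fin n)),
      HasDerivAt (fun t : ℝ => (1 + t * c x i) ^ α i) (α i * c x i) 0 := by
    intro i _
    have hinner : HasDerivAt (fun t : ℝ => 1 + t * c x i) (c x i) 0 := by
      simpa using ((hasDerivAt_id (0 : ℝ)).mul_const (c x i)).const_add 1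
    have := hinner.rpow_const (p := α i) (by left; norm_num)
    simpa [mul_comm] using this
  have := HasDerivAt.fun_finsetProd h1
  simpa using this

theorem stmt_16 (n : ℕ) (μ : (Fin n → Bool) → ℝ)
    (hμpos : ∀ x, 0 < μ x) (hμ1 : ∑ x, μ x = 1)
    (α : Fin n → ℝ) (hα0 : ∀ i, 0 < α i) (hα1 : ∀ i, α i ≤ 1)
    (hconc : ConcaveOn ℝ
      {p : (Fin n → ℝ) × (Fin n → ℝ) | (∀ i, 0 < p.1 i) ∧ (∀ i, 0 < p.2 i)}
      (fun p => Real.log (∑ x : Fin n → Bool, μ x *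
        (∏ i ∈ Finset.univ.filter (fun i => x i = true), p.1 i ^ α i) *
        (∏ i ∈ Finset.univ.filter (fun i => x i = false), p.2 i ^ α i)))) :
    ∀ ν : (Fin n → Bool) → ℝ, (∀ x, 0 ≤ ν x) → (∑ x, ν x = 1) →
      ∑ i, α i * KLdiv (coordMarg i ν) (coordMarg i μ) ≤ KLdiv ν μ := by
  intro ν hν0 hν1
  classical
  set C := ∑ i, α i with hC
  have key : ∀ ε : ℝ, 0 < ε →
      ∑ i, α i * KLdiv (coordMarg i ν) (coordMarg i μ)
        ≤ KLdiv ν μ + (Real.exp (ε * C) - 1) := by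
    intro ε hε
    have hma : ∀ i, 0 < coordMarg i μ true := fun i => marg_pos hμpos i true
    have hmb : ∀ i, 0 < coordMarg i μ false := fun i => marg_pos hμpos i false
    have hna : ∀ i, 0 ≤ coordMarg i ν true := fun i => marg_nonneg hν0 i true
    have hnb : ∀ i, 0 ≤ coordMarg i ν false := fun i => marg_nonneg hν0 i false
    have hνsum : ∀ i, coordMarg i ν true + coordMarg i ν false = 1 :=
      fun i => (marg_add ν i).trans hν1
    have hμsum : ∀ i, coordMarg i μ true + coordMarg i μ false = 1 :=
      fun i => (marg_add μ i).trans hμ1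
    set z : Fin n → ℝ := fun i =>
      if coordMarg i ν true = 0 then ε
      else coordMarg i ν true / coordMarg i μ true with hzdef
    set w : Fin n → ℝ := fun i =>
      if coordMarg i ν false = 0 then ε
      else coordMarg i ν false / coordMarg i μ false with hwdef
    have hz0 : ∀ i, 0 < z i := by
      intro i; rw [hzdef]; dsimp only; split
      · exact hε
      · exact div_pos (lt_of_le_of_ne (hna i) (Ne.symm ‹_›)) (hma i)
    have hw0 : ∀ i, 0 < w i := by
      intro i; rw [hwdef]; dsimp only; split
      · exact hε
      · exact div_pos (lt_of_le_of_ne (hnb i) (Ne.symm ‹_›)) (hmb i)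
    have hkey : ∀ i,
        coordMarg i μ true * (z i - 1) + coordMarg i μ false * (w i - 1) ≤ ε := by
      intro i
      simp only [hzdef, hwdef]
      split_ifs with h1 h2 h2
      · exfalso
        have := hνsum i
        rw [h1, h2] at this; norm_num at this
      · have hb1 : coordMarg i ν false = 1 := by linarith [hνsum i, h1]
        rw [h1] at *
        rw [hb1]
        have e1 : coordMarg i μ false * (1 / coordMarg i μ false - 1)
            = 1 - coordMarg i μ false := by
          have hne := (hmb i).ne'; field_simp
        nlinarith [hμsum i, hma i, hmb i, mul_pos (hmb i) hε]
      · have ha1 : coordMarg i ν true = 1 := by linarith [hνsum i, h2]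
        rw [ha1]
        have e1 : coordMarg i μ true * (1 / coordMarg i μ true - 1)
            = 1 - coordMarg i μ true := by
          have hne := (hma i).ne'; field_simp
        nlinarith [hμsum i, hma i, hmb i, mul_pos (hma i) hε]
      · have e1 : coordMarg i μ true * (coordMarg i ν true / coordMarg i μ true - 1)
            = coordMarg i ν true - coordMarg i μ true := by
          have hne := (hma i).ne'; field_simp
        have e2 : coordMarg i μ false * (coordMarg i ν false / coordMarg i μ false - 1)
            = coordMarg i ν false - coordMarg i μ false := by
          have hne := (hmb i).ne'; field_simp
        rw [e1, e2]
        linarith [hνsum i, hμsum i]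
    set c : (Fin n → Bool) → Fin n → ℝ :=
      fun x i => if x i = true then z i - 1 else w i - 1 with hcdef
    set d : ℝ := ∑ x : Fin n → Bool, μ x * ∑ i, α i * c x i with hddef
    have hd_le : d ≤ ε * C := by
      rw [hddef]
      have hite : ∀ (x : Fin n → Bool) i, α i * c x i
          = if x i = true then α i * (z i - 1) else α i * (w i - 1) := by
        intro x i; rw [hcdef]; dsimp only; split <;> rfl
      simp_rw [hite]
      rw [swap_sum μ (fun i => α i * (z i - 1)) (fun i => α i * (w i - 1)), hC,
        Finset.mul_sum]
      refine Finset.sum_le_sum fun i _ => ?_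
      nlinarith [hkey i, hα0 i]
    have hder := deriv_step μ α c
    have hG0 : (∑ x : Fin n → Bool, μ x * ∏ i, (1 + (0:ℝ) * c x i) ^ α i) = 1 := by
      simpa using hμ1
    have hlog0 : Real.log (∑ x : Fin n → Bool, μ x * ∏ i, (1 + (0:ℝ) * c x i) ^ α i) = 0 := by
      rw [hG0]; exact Real.log_one
    have hφ : HasDerivAt
        (fun t : ℝ => Real.log (∑ x : Fin n → Bool, μ x * ∏ i, (1 + t * c x i) ^ α i)) d 0 := by
      have := hder.log (by rw [hG0]; norm_num)
      rw [hG0, div_one] at this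
      exact this
    have hslope : Filter.Tendsto
        (fun t : ℝ => Real.log (∑ x : Fin n → Bool, μ x * ∏ i, (1 + t * c x i) ^ α i) / t)
        (nhdsWithin 0 (Set.Ioi 0)) (nhds d) := by
      have h := hasDerivAt_iff_tendsto_slope.mp hφ
      have h2 := h.mono_left
        (nhdsWithin_mono 0 (fun t ht => ne_of_gt ht : Set.Ioi (0:ℝ) ⊆ {(0:ℝ)}ᶜ))
      refine h2.congr (fun t => ?_)
      simp [slope_def_field, hμ1]
    have hQmem : (((fun _ => 1), (fun _ => 1)) : (Fin n → ℝ) × (Fin n → ℝ)) ∈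
        {p : (Fin n → ℝ) × (Fin n → ℝ) | (∀ i, 0 < p.1 i) ∧ (∀ i, 0 < p.2 i)} :=
      ⟨fun _ => one_pos, fun _ => one_pos⟩
    have hPmem : ((z, w) : (Fin n → ℝ) × (Fin n → ℝ)) ∈
        {p : (Fin n → ℝ) × (Fin n → ℝ) | (∀ i, 0 < p.1 i) ∧ (∀ i, 0 < p.2 i)} := ⟨hz0, hw0⟩
    have hgP_eq : (∑ x : Fin n → Bool, μ x *
          (∏ i ∈ Finset.univ.filter (fun i => x i = true), z i ^ α i) *
          (∏ i ∈ Finset.univ.filter (fun i => x i = false), w i ^ α i))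
        = ∑ x : Fin n → Bool, μ x * ∏ i, (if x i = true then z i else w i) ^ α i := by
      refine Finset.sum_congr rfl fun x _ => ?_
      rw [mul_assoc, prod_split]
      congr 1
      refine Finset.prod_congr rfl fun i _ => ?_
      split <;> rfl
    have hFP_le : Real.log (∑ x : Fin n → Bool,
        μ x * ∏ i, (if x i = true then z i else w i) ^ α i) ≤ d := by
      refine ge_of_tendsto hslope ?_
      have hIoc : Set.Ioc (0:ℝ) 1 ∈ nhdsWithin (0:ℝ) (Set.Ioi 0) :=
        Ioc_mem_nhdsGT_of_mem ⟨le_refl 0, zero_lt_one⟩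
      refine Filter.eventually_of_mem hIoc (fun t ht => ?_)
      obtain ⟨ht0, ht1⟩ := ht
      have hcc := hconc.2 hQmem hPmem (show (0:ℝ) ≤ 1 - t by linarith)
        (show (0:ℝ) ≤ t from le_of_lt ht0) (show (1 - t) + t = 1 by ring)
      have hcombo : ((1 - t) • (((fun _ => 1), (fun _ => 1)) : (Fin n → ℝ) × (Fin n → ℝ))
            + t • ((z, w) : (Fin n → ℝ) × (Fin n → ℝ)))
          = ((fun i => 1 + t * (z i - 1)), (fun i => 1 + t * (w i - 1))) := by
        refine Prod.ext ?_ ?_ <;> funext i <;>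
          simp [Prod.smul_fst, Prod.smul_snd, smul_eq_mul] <;> ring
      rw [hcombo] at hcc
      dsimp only at hcc
      have hFQ : Real.log (∑ x : Fin n → Bool,
          μ x * (∏ i ∈ Finset.univ.filter (fun i => x i = true), (1:ℝ) ^ α i) *
          (∏ i ∈ Finset.univ.filter (fun i => x i = false), (1:ℝ) ^ α i)) = 0 := by
        simp [Real.one_rpow, hμ1]
      have hcombo_eq : (∑ x : Fin n → Bool, μ x *
            (∏ i ∈ Finset.univ.filter (fun i => x i = true), (1 + t * (z i - 1)) ^ α i) *
            (∏ i ∈ Finset.univ.filter (fun i => x i = false), (1 + t * (w i - 1)) ^ α i))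
          = ∑ x : Fin n → Bool, μ x * ∏ i, (1 + t * c x i) ^ α i := by
        refine Finset.sum_congr rfl fun x _ => ?_
        rw [mul_assoc, prod_split]
        congr 1
        refine Finset.prod_congr rfl fun i _ => ?_
        simp only [hcdef]
        split <;> rfl
      rw [hFQ, hgP_eq, hcombo_eq, smul_eq_mul, smul_eq_mul, mul_zero, zero_add] at hcc
      rw [le_div_iff₀ ht0]
      linarith [hcc]
    have hhpos : ∀ x : Fin n → Bool, 0 < ∏ i, (if x i = true then z i else w i) ^ α i := by
      intro x
      refine Finset.prod_pos fun i _ => Real.rpow_pos_of_pos ?_ _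
      split
      · exact hz0 i
      · exact hw0 i
    have hgP_pos : 0 < ∑ x : Fin n → Bool, μ x * ∏ i, (if x i = true then z i else w i) ^ α i :=
      Finset.sum_pos (fun x _ => mul_pos (hμpos x) (hhpos x)) Finset.univ_nonempty
    have hgP_le : (∑ x : Fin n → Bool, μ x * ∏ i, (if x i = true then z i else w i) ^ α i)
        ≤ Real.exp (ε * C) := by
      rw [← Real.exp_log hgP_pos]
      exact Real.exp_le_exp.mpr (hFP_le.trans hd_le)
    have hterm : ∀ x : Fin n → Bool,
        ν x - μ x * ∏ i, (if x i = true then z i else w i) ^ α i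
          ≤ ν x * Real.log (ν x / μ x)
            - ν x * Real.log (∏ i, (if x i = true then z i else w i) ^ α i) := by
      intro x
      rcases eq_or_lt_of_le (hν0 x) with h1 | h1
      · rw [← h1]
        simp only [zero_mul, zero_sub, sub_zero, sub_self]
        nlinarith [mul_pos (hμpos x) (hhpos x)]
      · have hH := hhpos x
        have hμx := hμpos x
        have hlog := Real.log_le_sub_one_of_pos
          (show 0 < μ x * (∏ i, (if x i = true then z i else w i) ^ α i) / ν x by positivity)
        have e1 : Real.log (μ x * (∏ i, (if x i = true then z i else w i) ^ α i) / ν x)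
            = Real.log (μ x) + Real.log (∏ i, (if x i = true then z i else w i) ^ α i)
              - Real.log (ν x) := by
          rw [Real.log_div (by positivity) (ne_of_gt h1),
            Real.log_mul (ne_of_gt hμx) (ne_of_gt hH)]
        have e2 : Real.log (ν x / μ x) = Real.log (ν x) - Real.log (μ x) :=
          Real.log_div (ne_of_gt h1) (ne_of_gt hμx)
        rw [e1] at hlog
        rw [e2]
        have e3 : ν x * (μ x * (∏ i, (if x i = true then z i else w i) ^ α i) / ν x - 1)
            = μ x * (∏ i, (if x i = true then z i else w i) ^ α i) - ν x := by
          field_simp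
        have h4 := mul_le_mul_of_nonneg_left hlog (le_of_lt h1)
        rw [e3] at h4
        nlinarith [h4]
    have hsum1 : 1 - (∑ x : Fin n → Bool, μ x * ∏ i, (if x i = true then z i else w i) ^ α i)
        ≤ KLdiv ν μ
          - ∑ x : Fin n → Bool, ν x * Real.log (∏ i, (if x i = true then z i else w i) ^ α i) := by
      have hs := Finset.sum_le_sum (fun x (_ : x ∈ Finset.univ) => hterm x)
      rw [Finset.sum_sub_distrib, Finset.sum_sub_distrib, hν1] at hs
      rw [KLdiv]
      linarith [hs]
    have hEν : ∑ x : Fin n → Bool, ν x * Real.log (∏ i, (if x i = true then z i else w i) ^ α i)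
        = ∑ i, α i * KLdiv (coordMarg i ν) (coordMarg i μ) := by
      have hlogh : ∀ x : Fin n → Bool,
          Real.log (∏ i, (if x i = true then z i else w i) ^ α i)
            = ∑ i, if x i = true then α i * Real.log (z i) else α i * Real.log (w i) := by
        intro x
        rw [Real.log_prod (fun i _ => ne_of_gt (Real.rpow_pos_of_pos
          (by split_ifs; exacts [hz0 i, hw0 i]) _))]
        refine Finset.sum_congr rfl fun i _ => ?_
        split_ifs with hxi
        · rw [Real.log_rpow (hz0 i)]
        · rw [Real.log_rpow (hw0 i)]
      simp_rw [hlogh]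
      rw [swap_sum ν (fun i => α i * Real.log (z i)) (fun i => α i * Real.log (w i))]
      refine Finset.sum_congr rfl fun i _ => ?_
      rw [KLdiv, Fintype.sum_bool]
      have e1 : coordMarg i ν true * Real.log (z i)
          = coordMarg i ν true * Real.log (coordMarg i ν true / coordMarg i μ true) := by
        simp only [hzdef]
        split_ifs with h0
        · rw [h0]; ring
        · rfl
      have e2 : coordMarg i ν false * Real.log (w i)
          = coordMarg i ν false * Real.log (coordMarg i ν false / coordMarg i μ false) := by
        simp only [hwdef]
        split_ifs with h0
        · rw [h0]; ring
        · rfl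
      rw [← e1, ← e2]
      ring
    calc ∑ i, α i * KLdiv (coordMarg i ν) (coordMarg i μ)
        = ∑ x : Fin n → Bool, ν x * Real.log (∏ i, (if x i = true then z i else w i) ^ α i) :=
          hEν.symm
      _ ≤ KLdiv ν μ + (Real.exp (ε * C) - 1) := by linarith [hsum1, hgP_le]
  have hten : Filter.Tendsto (fun ε : ℝ => KLdiv ν μ + (Real.exp (ε * C) - 1))
      (nhdsWithin 0 (Set.Ioi 0)) (nhds (KLdiv ν μ)) := by
    have h1 : Filter.Tendsto (fun ε : ℝ => KLdiv ν μ + (Real.exp (ε * C) - 1)) (nhds 0)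
        (nhds (KLdiv ν μ + (Real.exp ((0:ℝ) * C) - 1))) := by
      exact (tendsto_const_nhds.add (((Real.continuous_exp.comp
        (continuous_id.mul continuous_const)).tendsto 0).sub_const 1))
    simpa using h1.mono_left nhdsWithin_le_nhds
  exact ge_of_tendsto hten (eventually_nhdsWithin_of_forall (fun ε hε => key ε hε))
end

section
/- Let J ∈ ℝ^{n×n} be symmetric with ‖Jx‖₂ ≤ ‖x‖₂ for all x ∈ ℝⁿ, let h ∈ ℝⁿ, and let μ = μ_{J,h} be the corresponding Ising model on {−1,1}ⁿ. Let σ, τ ∈ {−1,1}ⁿ with σ ≠ τ, let i ∈ [n] be a coordinate with σ_i ≠ τ_i, and let σ^i, τ^i denote σ and τ with the i-th coordinate flipped. Then μ(σ)·μ(τ) ≤ exp(4√n)·μ(σ^i)·μ(τ^i). -/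
open Finset

/-- The ±1 spin vector associated to a Boolean configuration. -/
noncomputable def spin {n : ℕ} (x : Fin n → Bool) : Fin n → ℝ :=
  fun i => if x i then 1 else -1

/-- The Ising model `μ_{J,h}(x) ∝ exp(½⟨x,Jx⟩ + ⟨h,x⟩)` on `{−1,1}ⁿ`. -/
noncomputable def ising {n : ℕ} (J : Fin n → Fin n → ℝ) (h : Fin n → ℝ)
    (x : Fin n → Bool) : ℝ :=
  Real.exp ((1 / 2) * (∑ i, ∑ j, spin x i * J i j * spin x j) + ∑ i, h i * spin x i) /
    ∑ y : Fin n → Bool, Real.exp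
      ((1 / 2) * (∑ i, ∑ j, spin y i * J i j * spin y j) + ∑ i, h i * spin y i)

/-- Flip the `i`-th coordinate of a configuration. -/
def flipAt {n : ℕ} (x : Fin n → Bool) (i : Fin n) : Fin n → Bool :=
  Function.update x i (!(x i))

lemma spin_sq {n : ℕ} (x : Fin n → Bool) (i : Fin n) : spin x i * spin x i = 1 := by
  unfold spin; cases x i <;> norm_num

lemma spin_flipAt {n : ℕ} (x : Fin n → Bool) (i : Fin n) :
    spin (flipAt x i) = fun j => spin x j - (if j = i then 2 * spin x i else 0) := by
  funext j
  by_cases hj : j = i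
  · subst hj; simp [spin, flipAt, Function.update]; cases x j <;> norm_num
  · simp [spin, flipAt, Function.update, hj]

noncomputable def ene {n : ℕ} (J : Fin n → Fin n → ℝ) (h : Fin n → ℝ) (x : Fin n → Bool) : ℝ :=
  (1 / 2) * (∑ i, ∑ j, spin x i * J i j * spin x j) + ∑ i, h i * spin x i

lemma ene_flip {n : ℕ} (J : Fin n → Fin n → ℝ) (hsymm : ∀ i j, J i j = J j i)
    (h : Fin n → ℝ) (x : Fin n → Bool) (i : Fin n) :
    ene J h (flipAt x i) =
      ene J h x - (2 * spin x i * (∑ j, J i j * spin x j) - 2 * J i i + 2 * h i * spin x i) := by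
  unfold ene
  rw [show spin (flipAt x i) = fun j => spin x j - (fun j => if j = i then 2 * spin x i else 0) j
    from spin_flipAt x i]
  set s := spin x with hs
  set d : Fin n → ℝ := fun j => if j = i then 2 * s i else 0 with hd
  have e1 : ∀ a b : Fin n, (s a - d a) * J a b * (s b - d b)
      = s a * J a b * s b - d a * (J a b * s b) - (s a * J a b) * d b + d a * J a b * d b := by
    intro a b; ring
  have hds : (∑ a, ∑ b, d a * (J a b * s b)) = 2 * s i * ∑ b, J i b * s b := by
    rw [Finset.sum_comm]
    simp only [hd, ite_mul, zero_mul]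
    rw [Finset.mul_sum]
    congr 1; funext b
    rw [Finset.sum_ite_eq' Finset.univ i (fun a => 2 * s i * (J a b * s b))]
    simp only [Finset.mem_univ, if_true]
  have hsd : (∑ a, ∑ b, (s a * J a b) * d b) = 2 * s i * ∑ b, J i b * s b := by
    simp only [hd, mul_ite, mul_zero]
    rw [Finset.mul_sum]
    congr 1; funext a
    rw [Finset.sum_ite_eq' Finset.univ i (fun b => s a * J a b * (2 * s i))]
    simp only [Finset.mem_univ, if_true]
    rw [hsymm a i]; ring
  have hdd : (∑ a, ∑ b, d a * J a b * d b) = 4 * J i i := by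
    have hsq := spin_sq x i
    rw [← hs] at hsq
    have e : ∀ a b : Fin n, d a * J a b * d b
        = (if b = i then (if a = i then 4 * J i i else 0) else 0) := by
      intro a b
      by_cases ha : a = i
      · by_cases hb : b = i
        · simp only [hd, ha, hb, eq_self_iff_true, if_true]
          linear_combination (4 * J i i) * hsq
        · simp [hd, ha, hb]
      · simp [hd, ha]
    simp only [e, Finset.sum_ite_eq', Finset.mem_univ, if_true]
  have hhd : (∑ a, h a * (s a - d a)) = (∑ a, h a * s a) - 2 * h i * s i := by
    simp only [mul_sub, Finset.sum_sub_distrib, hd, mul_ite, mul_zero]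
    congr 1
    rw [Finset.sum_ite_eq' Finset.univ i (fun a => h a * (2 * s i))]
    simp; ring
  simp only [e1, Finset.sum_add_distrib, Finset.sum_sub_distrib, hds, hsd, hdd, hhd]
  ring

lemma ising_eq {n : ℕ} (J : Fin n → Fin n → ℝ) (h : Fin n → ℝ) (x : Fin n → Bool) :
    ising J h x = Real.exp (ene J h x) / (∑ y : Fin n → Bool, Real.exp (ene J h y)) := rfl

theorem stmt_17 (n : ℕ) (J : Fin n → Fin n → ℝ)
    (hsymm : ∀ i j, J i j = J j i)
    (hop : ∀ x : Fin n → ℝ,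
      Real.sqrt (∑ i, (∑ j, J i j * x j) ^ 2) ≤ Real.sqrt (∑ i, x i ^ 2))
    (h : Fin n → ℝ) (σ τ : Fin n → Bool) (hστ : σ ≠ τ)
    (i : Fin n) (hi : σ i ≠ τ i) :
    ising J h σ * ising J h τ ≤
      Real.exp (4 * Real.sqrt (n : ℝ)) *
        (ising J h (flipAt σ i) * ising J h (flipAt τ i)) := by
  -- spin facts
  have hsq : spin σ i * spin σ i = 1 := spin_sq σ i
  have habs : |spin σ i| = 1 := by unfold spin; cases σ i <;> norm_num
  have hti : spin τ i = - spin σ i := by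
    unfold spin; cases hσi : σ i <;> cases hτi : τ i <;> simp_all
  -- the difference vector with i-th coordinate zeroed out
  set w : Fin n → ℝ := fun j => if j = i then 0 else spin σ j - spin τ j with hw
  set C : ℝ := ∑ j, J i j * w j with hC
  -- energy identity
  have hflipσ := ene_flip J hsymm h σ i
  have hflipτ := ene_flip J hsymm h τ i
  have hsumw : (∑ j, J i j * spin σ j) - (∑ j, J i j * spin τ j) - C
      = 2 * spin σ i * J i i := by
    rw [hC, ← Finset.sum_sub_distrib, ← Finset.sum_sub_distrib]
    have e : ∀ j, J i j * spin σ j - J i j * spin τ j - J i j * w j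
        = if j = i then 2 * spin σ i * J i i else 0 := by
      intro j
      by_cases hj : j = i
      · subst hj
        simp only [hw, hti, eq_self_iff_true, if_true]
        ring
      · simp only [hw, if_neg hj]; ring
    simp only [e, Finset.sum_ite_eq', Finset.mem_univ, if_true]
  have hD : ene J h σ + ene J h τ - ene J h (flipAt σ i) - ene J h (flipAt τ i)
      = 2 * spin σ i * C := by
    rw [hflipσ, hflipτ, hti]
    linear_combination 2 * spin σ i * hsumw + 4 * J i i * hsq
  -- bound |C| ≤ 2√n
  have h1 : C ^ 2 ≤ ∑ k, (∑ j, J k j * w j) ^ 2 := by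
    rw [hC]
    exact Finset.single_le_sum (f := fun k => (∑ j, J k j * w j) ^ 2)
      (fun k _ => sq_nonneg _) (Finset.mem_univ i)
  have h2 : (∑ j, w j ^ 2) ≤ 4 * n := by
    calc (∑ j, w j ^ 2) ≤ ∑ _j : Fin n, (4:ℝ) := by
          apply Finset.sum_le_sum
          intro j _
          by_cases hj : j = i
          · simp [hw, hj]
          · simp only [hw, if_neg hj]
            unfold spin; cases σ j <;> cases τ j <;> norm_num
      _ = 4 * n := by simp [Finset.sum_const, mul_comm]
  have hsqrt4n : Real.sqrt (4 * n) = 2 * Real.sqrt n := by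
    rw [Real.sqrt_mul (by norm_num : (0:ℝ) ≤ 4) (n:ℝ),
      show (4:ℝ) = 2 ^ 2 by norm_num, Real.sqrt_sq (by norm_num : (0:ℝ) ≤ 2)]
  have hCbound : |C| ≤ 2 * Real.sqrt n := by
    have := hop w
    calc |C| = Real.sqrt (C ^ 2) := (Real.sqrt_sq_eq_abs C).symm
      _ ≤ Real.sqrt (∑ k, (∑ j, J k j * w j) ^ 2) := Real.sqrt_le_sqrt h1
      _ ≤ Real.sqrt (∑ j, w j ^ 2) := hop w
      _ ≤ Real.sqrt (4 * n) := Real.sqrt_le_sqrt h2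
      _ = 2 * Real.sqrt n := hsqrt4n
  have hDbound : ene J h σ + ene J h τ - ene J h (flipAt σ i) - ene J h (flipAt τ i)
      ≤ 4 * Real.sqrt n := by
    rw [hD]
    calc 2 * spin σ i * C ≤ |2 * spin σ i * C| := le_abs_self _
      _ = 2 * |C| := by rw [abs_mul, abs_mul, habs]; simp [abs_of_nonneg]
      _ ≤ 2 * (2 * Real.sqrt n) := by linarith
      _ = 4 * Real.sqrt n := by ring
  -- assemble
  have hZpos : (0:ℝ) < ∑ y : Fin n → Bool, Real.exp (ene J h y) :=
    Finset.sum_pos (fun y _ => Real.exp_pos _) Finset.univ_nonempty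
  rw [ising_eq, ising_eq, ising_eq, ising_eq]
  set Z := ∑ y : Fin n → Bool, Real.exp (ene J h y) with hZ
  rw [div_mul_div_comm, div_mul_div_comm]
  rw [show Real.exp (4 * Real.sqrt (n:ℝ)) *
      (Real.exp (ene J h (flipAt σ i)) * Real.exp (ene J h (flipAt τ i)) / (Z * Z))
      = (Real.exp (4 * Real.sqrt (n:ℝ)) *
        (Real.exp (ene J h (flipAt σ i)) * Real.exp (ene J h (flipAt τ i)))) / (Z * Z)
    from by ring]
  have hnum : Real.exp (ene J h σ) * Real.exp (ene J h τ) ≤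
      Real.exp (4 * Real.sqrt (n:ℝ)) *
        (Real.exp (ene J h (flipAt σ i)) * Real.exp (ene J h (flipAt τ i))) := by
    rw [← Real.exp_add, ← Real.exp_add, ← Real.exp_add, Real.exp_le_exp]
    linarith [hDbound]
  exact div_le_div_of_nonneg_right hnum (by positivity)
end
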